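/- Strong duality for the SOCP with fixed commitments: Assume the MIQP is feasible, a_k ≠ 0, c_k ≥ 0, r_k > 0 for all k. Let z* be an optimal commitment vector. Then the optimal value of the primal SOCP (min Σ_k c_k x_k + d_k z*_k + r_k y_k s.t. Σ_k a_k x_k = b_0, g_k x_k + h_k z*_k ≥ b_k, (y_k+1, y_k−1, 2(x_k−x_k^0)) ∈ K³, x_k, y_k ≥ 0) equals the optimal value of its conic dual (max b_0 p_0 + Σ_k (b_k q_k + z*_k p_k − γ_k + α_k + 2β_k x_k^0) s.t. c_k − a_k p_0 − g_k q_k − 2β_k ≥ 0, d_k − h_k q_k − p_k ≥ 0, r_k − γ_k − α_k ≥ 0, (γ_k, α_k, β_k) ∈ K³, q_k ≥ 0), and both optima are attained. -/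

import Mathlib

/-- Membership in the second-order cone `K³`. -/
def SOC3 (w0 w1 w2 : ℝ) : Prop := w0 ≥ Real.sqrt (w1 ^ 2 + w2 ^ 2)

lemma soc3_to_sq {t y : ℝ} (hy : 0 ≤ y) (hsoc : SOC3 (y + 1) (y - 1) (2 * t)) :
    t ^ 2 ≤ y := by
  have hs : Real.sqrt ((y-1)^2 + (2*t)^2) ≤ y + 1 := hsoc
  have h2 : (y-1)^2 + (2*t)^2 ≤ (y+1)^2 := by
    have hnn : (0:ℝ) ≤ (y-1)^2 + (2*t)^2 := by positivity
    have := Real.sq_sqrt hnn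
    nlinarith [Real.sqrt_nonneg ((y-1)^2 + (2*t)^2)]
  nlinarith

lemma sq_to_soc3 {t y : ℝ} (hle : t ^ 2 ≤ y) : SOC3 (y + 1) (y - 1) (2 * t) := by
  have hy : 0 ≤ y := le_trans (sq_nonneg t) hle
  show (y+1) ≥ Real.sqrt ((y-1)^2 + (2*t)^2)
  have h1 : Real.sqrt ((y-1)^2 + (2*t)^2) ≤ Real.sqrt ((y+1)^2) := by
    apply Real.sqrt_le_sqrt; nlinarith
  calc Real.sqrt ((y-1)^2 + (2*t)^2) ≤ Real.sqrt ((y+1)^2) := h1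
    _ = y + 1 := Real.sqrt_sq (by linarith)

lemma soc3_unpack {ga al be : ℝ} (hsoc : SOC3 ga al be) :
    0 ≤ ga ∧ al^2 + be^2 ≤ ga^2 := by
  have h0 : 0 ≤ ga := le_trans (Real.sqrt_nonneg _) hsoc
  have hnn : (0:ℝ) ≤ al^2 + be^2 := by positivity
  have := Real.sq_sqrt hnn
  have hs : Real.sqrt (al^2 + be^2) ≤ ga := hsoc
  exact ⟨h0, by nlinarith [Real.sqrt_nonneg (al^2 + be^2)]⟩

lemma quad_key {ga al be t y : ℝ} (h1 : 0 ≤ ga) (h2 : al^2 + be^2 ≤ ga^2)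
    (hy : t^2 ≤ y) : 0 ≤ 2*be*t + (ga+al)*y + ga - al := by
  have hga : 0 ≤ ga + al := by nlinarith [sq_nonneg be]
  rcases eq_or_lt_of_le hga with h0 | h0
  · have hbe : be = 0 := by nlinarith [sq_nonneg be]
    have hal : al = -ga := by linarith
    rw [hbe, hal]; ring_nf; linarith
  · nlinarith [sq_nonneg ((ga+al)*t + be), mul_nonneg (mul_nonneg hga hga) (sub_nonneg.mpr hy), mul_pos h0 h0]

set_option maxHeartbeats 1000000 in
theorem socp_strong_duality (n : ℕ) (c d a g h b x0 r : Fin n → ℝ) (b0 : ℝ)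
    (ha : ∀ k, a k ≠ 0) (hc : ∀ k, 0 ≤ c k) (hr : ∀ k, 0 < r k)
    (zs : Fin n → ℝ) (hzs : ∀ k, zs k = 0 ∨ zs k = 1)
    -- z* is the binary part of an optimal solution of the mixed-integer problem
    (hopt : ∃ xs : Fin n → ℝ,
      (∑ k, a k * xs k = b0) ∧ (∀ k, g k * xs k + h k * zs k ≥ b k) ∧
      (∀ k, 0 ≤ xs k) ∧
      ∀ x z : Fin n → ℝ,
        (∑ k, a k * x k = b0) → (∀ k, g k * x k + h k * z k ≥ b k) →
        (∀ k, 0 ≤ x k) → (∀ k, z k = 0 ∨ z k = 1) →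
        ∑ k, (c k * xs k + d k * zs k + r k * (xs k - x0 k) ^ 2) ≤
          ∑ k, (c k * x k + d k * z k + r k * (x k - x0 k) ^ 2)) :
    ∃ v : ℝ,
      IsLeast {v : ℝ | ∃ x y : Fin n → ℝ,
        (∑ k, a k * x k = b0) ∧ (∀ k, g k * x k + h k * zs k ≥ b k) ∧
        (∀ k, SOC3 (y k + 1) (y k - 1) (2 * (x k - x0 k))) ∧
        (∀ k, 0 ≤ x k) ∧ (∀ k, 0 ≤ y k) ∧
        v = ∑ k, (c k * x k + d k * zs k + r k * y k)} v ∧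
      IsGreatest {w : ℝ | ∃ (p0 : ℝ) (p q γ α β : Fin n → ℝ),
        (∀ k, c k - a k * p0 - g k * q k - 2 * β k ≥ 0) ∧
        (∀ k, d k - h k * q k - p k ≥ 0) ∧
        (∀ k, r k - γ k - α k ≥ 0) ∧
        (∀ k, SOC3 (γ k) (α k) (β k)) ∧
        (∀ k, 0 ≤ q k) ∧
        w = b0 * p0 + ∑ k, (b k * q k + zs k * p k - γ k + α k + 2 * β k * x0 k)} v := by
  classical
  obtain ⟨xs, hfeq, hfineq, hxs, hmin⟩ := hopt
  have hzs0 : ∀ k, 0 ≤ zs k := by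
    intro k; rcases hzs k with hk | hk <;> rw [hk] <;> norm_num
  set v : ℝ := ∑ k, (c k * xs k + d k * zs k + r k * (xs k - x0 k)^2) with hv
  set σ : Fin n → ℝ := fun k => g k * xs k + h k * zs k - b k with hσdef
  have hσ : ∀ k, 0 ≤ σ k := by
    intro k; have := hfineq k; simp only [hσdef]; linarith
  set D0 : Fin n → ℝ := fun k => c k + 2 * r k * (xs k - x0 k) with hD0def
  set Mov : Fin n → ℝ → Prop := fun k s => ∃ ε > (0:ℝ), ∀ t : ℝ, 0 < t → t ≤ ε →
    0 ≤ xs k + t * s ∧ g k * (xs k + t * s) + h k * zs k ≥ b k with hMovdef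
  -- structural conditions imply movability
  have mov_pos : ∀ (k : Fin n) (s : ℝ), 0 < s → (0 < σ k ∨ 0 ≤ g k) → Mov k s := by
    intro k s hs hstr
    simp only [hσdef] at hstr
    rw [hMovdef]
    rcases hstr with hsl | hg
    · refine ⟨(g k * xs k + h k * zs k - b k) / (|g k| * s + 1), by positivity, ?_⟩
      intro t ht htε
      have hts : 0 < t * s := mul_pos ht hs
      constructor
      · nlinarith [hxs k]
      · have h1 : t * (|g k| * s + 1) ≤ g k * xs k + h k * zs k - b k := by
          rw [← le_div_iff₀ (by positivity)]; exact htε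
        have h2 : -|g k| ≤ g k := neg_abs_le (g k)
        nlinarith [abs_nonneg (g k)]
    · refine ⟨1, one_pos, ?_⟩
      intro t ht htε
      have hts : 0 < t * s := mul_pos ht hs
      constructor
      · nlinarith [hxs k]
      · nlinarith [mul_nonneg hg hts.le, hfineq k]
  have mov_neg : ∀ (k : Fin n) (s : ℝ), s < 0 → 0 < xs k → (0 < σ k ∨ g k ≤ 0) → Mov k s := by
    intro k s hs hx hstr
    simp only [hσdef] at hstr
    rw [hMovdef]
    have hns : 0 < -s := by linarith
    rcases hstr with hsl | hg
    · refine ⟨min (xs k / (-s)) ((g k * xs k + h k * zs k - b k) / (|g k| * (-s) + 1)),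
        by positivity, ?_⟩
      intro t ht htε
      have hts : 0 < t * (-s) := mul_pos ht hns
      have h0 : t * (-s) ≤ xs k := by
        have h0' := le_trans htε (min_le_left _ _)
        rw [← le_div_iff₀ hns]; linarith
      constructor
      · nlinarith
      · have h1 : t * (|g k| * (-s) + 1) ≤ g k * xs k + h k * zs k - b k := by
          rw [← le_div_iff₀ (by positivity)]; exact le_trans htε (min_le_right _ _)
        have h2 : g k ≤ |g k| := le_abs_self (g k)
        nlinarith [abs_nonneg (g k)]
    · refine ⟨xs k / (-s), by positivity, ?_⟩
      intro t ht htε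
      have hts : 0 < t * (-s) := mul_pos ht hns
      have h0 : t * (-s) ≤ xs k := by rw [← le_div_iff₀ hns]; exact htε
      constructor
      · nlinarith
      · nlinarith [mul_nonneg (neg_nonneg.mpr hg) hts.le, hfineq k]
  -- the pairwise price inequality from optimality
  have pair : ∀ j k : Fin n, Mov j (1 / a j) → Mov k (-(1 / a k)) →
      D0 k / a k ≤ D0 j / a j := by
    intro j k hj hk
    by_cases hjk : j = k
    · subst hjk; exact le_refl _
    by_contra hlt
    push_neg at hlt
    rw [hMovdef] at hj hk
    obtain ⟨ε₁, hε₁, H₁⟩ := hj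
    obtain ⟨ε₂, hε₂, H₂⟩ := hk
    set C : ℝ := r j / (a j)^2 + r k / (a k)^2 with hC
    have hCpos : 0 < C := by
      have h1 : (0:ℝ) < a j ^ 2 := lt_of_le_of_ne (sq_nonneg _) (Ne.symm (pow_ne_zero 2 (ha j)))
      have h2 : (0:ℝ) < a k ^ 2 := lt_of_le_of_ne (sq_nonneg _) (Ne.symm (pow_ne_zero 2 (ha k)))
      exact add_pos (div_pos (hr j) h1) (div_pos (hr k) h2)
    set gap : ℝ := D0 k / a k - D0 j / a j with hgap
    have hgappos : 0 < gap := by simp only [hgap]; linarith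
    set t : ℝ := min (min ε₁ ε₂) (gap / (2 * C)) with htdef
    have ht0 : 0 < t := lt_min (lt_min hε₁ hε₂) (by positivity)
    have ht1 : t ≤ ε₁ := le_trans (min_le_left _ _) (min_le_left _ _)
    have ht2 : t ≤ ε₂ := le_trans (min_le_left _ _) (min_le_right _ _)
    have ht3 : t * (2 * C) ≤ gap := by
      calc t * (2 * C) ≤ (gap / (2 * C)) * (2 * C) := by
            apply mul_le_mul_of_nonneg_right (min_le_right _ _) (by positivity)
        _ = gap := by field_simp
    set x' : Fin n → ℝ :=
      fun i => xs i + (if i = j then t / a j else 0) - (if i = k then t / a k else 0) with hx'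
    have hx'j : x' j = xs j + t * (1 / a j) := by
      simp only [hx', if_true]
      rw [if_neg hjk]; ring
    have hx'k : x' k = xs k + t * (-(1 / a k)) := by
      simp only [hx', if_true]
      rw [if_neg (fun hh => hjk hh.symm)]; ring
    have hx'o : ∀ i, i ≠ j → i ≠ k → x' i = xs i := by
      intro i h1 h2; simp only [hx', if_neg h1, if_neg h2]; ring
    have hjfeas := H₁ t ht0 ht1
    have hkfeas := H₂ t ht0 ht2
    have hsum : ∑ i, a i * x' i = b0 := by
      have key : ∀ i : Fin n, a i * x' i
          = a i * xs i + ((if i = j then t else 0) - (if i = k then t else 0)) := by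
        intro i
        by_cases h1 : i = j
        · subst h1; rw [if_pos rfl, if_neg hjk, hx'j]
          field_simp [ha i]
          ring
        · by_cases h2 : i = k
          · subst h2; rw [if_neg h1, if_pos rfl, hx'k]
            field_simp [ha i]
            ring
          · rw [if_neg h1, if_neg h2, hx'o i h1 h2]; ring
      rw [Finset.sum_congr rfl (fun i _ => key i), Finset.sum_add_distrib,
        Finset.sum_sub_distrib, hfeq]
      simp [Finset.sum_ite_eq']
    have hineq : ∀ i, g i * x' i + h i * zs i ≥ b i := by
      intro i
      by_cases h1 : i = j
      · subst h1; rw [hx'j]; exact hjfeas.2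
      · by_cases h2 : i = k
        · subst h2; rw [hx'k]; exact hkfeas.2
        · rw [hx'o i h1 h2]
          exact hfineq i
    have hpos : ∀ i, 0 ≤ x' i := by
      intro i
      by_cases h1 : i = j
      · subst h1; rw [hx'j]; exact hjfeas.1
      · by_cases h2 : i = k
        · subst h2; rw [hx'k]; exact hkfeas.1
        · rw [hx'o i h1 h2]; exact hxs i
    have hkey := hmin x' zs hsum hineq hpos hzs
    have hdiff : ∀ i : Fin n, (c i * x' i + d i * zs i + r i * (x' i - x0 i)^2)
        = (c i * xs i + d i * zs i + r i * (xs i - x0 i)^2)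
          + ((if i = j then D0 j * (t / a j) + r j * (t / a j)^2 else 0)
          + (if i = k then -(D0 k * (t / a k)) + r k * (t / a k)^2 else 0)) := by
      intro i
      by_cases h1 : i = j
      · subst h1
        rw [if_pos rfl, if_neg hjk, hx'j, hD0def]
        field_simp [ha i]
        ring
      · by_cases h2 : i = k
        · subst h2
          rw [if_neg h1, if_pos rfl, hx'k, hD0def]
          field_simp [ha i]
          ring
        · rw [if_neg h1, if_neg h2, hx'o i h1 h2]; ring
    have hexp : ∑ i, (c i * x' i + d i * zs i + r i * (x' i - x0 i)^2)
        = (∑ i, (c i * xs i + d i * zs i + r i * (xs i - x0 i)^2))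
          + ((D0 j * (t / a j) + r j * (t / a j)^2)
             + (-(D0 k * (t / a k)) + r k * (t / a k)^2)) := by
      rw [Finset.sum_congr rfl (fun i _ => hdiff i), Finset.sum_add_distrib,
        Finset.sum_add_distrib]
      simp [Finset.sum_add_distrib, Finset.sum_ite_eq']
    rw [hexp] at hkey
    have hmain : 0 ≤ D0 j * (t / a j) + r j * (t / a j)^2
        + (-(D0 k * (t / a k)) + r k * (t / a k)^2) := by linarith
    have hident : D0 j * (t / a j) + r j * (t / a j)^2
        + (-(D0 k * (t / a k)) + r k * (t / a k)^2) = t * (-gap) + t^2 * C := by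
      simp only [hgap, hC]
      field_simp [ha j, ha k]
      ring
    rw [hident] at hmain
    nlinarith [mul_le_mul_of_nonneg_left ht3 ht0.le, mul_pos ht0 hgappos]
  -- existence of the equality multiplier
  obtain ⟨p0, hpA, hpB⟩ : ∃ p0 : ℝ, (∀ k, Mov k (1 / a k) → p0 ≤ D0 k / a k) ∧
      (∀ k, Mov k (-(1 / a k)) → D0 k / a k ≤ p0) := by
    by_cases hA : ∃ j, Mov j (1 / a j)
    · obtain ⟨j0, hj0⟩ := hA
      set S : Finset (Fin n) := Finset.univ.filter (fun k => Mov k (1 / a k)) with hS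
      have hSne : S.Nonempty :=
        ⟨j0, by simp only [hS, Finset.mem_filter, Finset.mem_univ, true_and]; exact hj0⟩
      set T := S.image (fun k => D0 k / a k) with hT
      have hTne : T.Nonempty := hSne.image _
      refine ⟨T.min' hTne, ?_, ?_⟩
      · intro k hk
        exact Finset.min'_le T _ (Finset.mem_image_of_mem _
          (by simp only [hS, Finset.mem_filter, Finset.mem_univ, true_and]; exact hk))
      · intro k hk
        obtain ⟨j, hjS, hje⟩ := Finset.mem_image.mp (T.min'_mem hTne)
        rw [← hje]
        exact pair j k
          (by simpa only [hS, Finset.mem_filter, Finset.mem_univ, true_and] using hjS) hk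
    · by_cases hB : ∃ j, Mov j (-(1 / a j))
      · obtain ⟨j0, hj0⟩ := hB
        set S : Finset (Fin n) := Finset.univ.filter (fun k => Mov k (-(1 / a k))) with hS
        have hSne : S.Nonempty :=
          ⟨j0, by simp only [hS, Finset.mem_filter, Finset.mem_univ, true_and]; exact hj0⟩
        set T := S.image (fun k => D0 k / a k) with hT
        have hTne : T.Nonempty := hSne.image _
        refine ⟨T.max' hTne, ?_, ?_⟩
        · intro k hk; exact absurd ⟨k, hk⟩ hA
        · intro k hk
          exact Finset.le_max' T _ (Finset.mem_image_of_mem _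
            (by simp only [hS, Finset.mem_filter, Finset.mem_univ, true_and]; exact hk))
      · push_neg at hA hB
        exact ⟨0, fun k hk => absurd hk (hA k), fun k hk => absurd hk (hB k)⟩
  set D : Fin n → ℝ := fun k => D0 k - a k * p0 with hDdef
  have hDpos : ∀ k, (0 < σ k ∨ 0 ≤ g k) → 0 ≤ D k := by
    intro k hstr
    rcases (ha k).lt_or_gt with hlt | hgt
    · have hmov := mov_pos k (-(1 / a k)) (by
        have := one_div_neg.mpr hlt; linarith) hstr
      have hB := hpB k hmov
      rw [div_le_iff_of_neg hlt] at hB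
      simp only [hDdef]; nlinarith
    · have hmov := mov_pos k (1 / a k) (by positivity) hstr
      have hA := hpA k hmov
      rw [le_div_iff₀ hgt] at hA
      simp only [hDdef]; nlinarith
  have hDneg : ∀ k, 0 < xs k → (0 < σ k ∨ g k ≤ 0) → D k ≤ 0 := by
    intro k hx hstr
    rcases (ha k).lt_or_gt with hlt | hgt
    · have hmov := mov_neg k (1 / a k) (one_div_neg.mpr hlt) hx hstr
      have hA := hpA k hmov
      rw [le_div_iff_of_neg hlt] at hA
      simp only [hDdef]; nlinarith
    · have hmov := mov_neg k (-(1 / a k)) (by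
        have := one_div_pos.mpr hgt; linarith) hx hstr
      have hB := hpB k hmov
      rw [div_le_iff₀ hgt] at hB
      simp only [hDdef]; nlinarith
  -- inequality multipliers
  set q : Fin n → ℝ := fun k => if g k = 0 ∨ σ k ≠ 0 then 0 else max 0 (D k / g k) with hqdef
  have hq : ∀ k, 0 ≤ q k ∧ 0 ≤ D k - g k * q k ∧ q k * σ k = 0 ∧ (D k - g k * q k) * xs k = 0 := by
    intro k
    by_cases h1 : g k = 0 ∨ σ k ≠ 0
    · have hq0 : q k = 0 := by simp only [hqdef]; rw [if_pos h1]
      have hD : 0 ≤ D k := by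
        rcases h1 with hg0 | hσne
        · exact hDpos k (Or.inr (le_of_eq hg0.symm))
        · exact hDpos k (Or.inl (lt_of_le_of_ne (hσ k) (Ne.symm hσne)))
      have hDx : (D k - g k * q k) * xs k = 0 := by
        rcases eq_or_lt_of_le (hxs k) with hx0 | hx0
        · rw [← hx0]; ring
        · have hD2 : D k ≤ 0 := by
            rcases h1 with hg0 | hσne
            · exact hDneg k hx0 (Or.inr (le_of_eq hg0))
            · exact hDneg k hx0 (Or.inl (lt_of_le_of_ne (hσ k) (Ne.symm hσne)))
          have hDz : D k = 0 := le_antisymm hD2 hD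
          rw [hDz, hq0]; ring
      refine ⟨le_of_eq hq0.symm, ?_, ?_, hDx⟩
      · rw [hq0, mul_zero, sub_zero]; exact hD
      · rw [hq0, zero_mul]
    · have hg : g k ≠ 0 := fun hh => h1 (Or.inl hh)
      have hσ0 : σ k = 0 := not_not.mp fun hh => h1 (Or.inr hh)
      have hqv : q k = max 0 (D k / g k) := by simp only [hqdef]; rw [if_neg h1]
      have hcan : g k * (D k / g k) = D k := by field_simp
      refine ⟨by rw [hqv]; exact le_max_left _ _, ?_, by rw [hσ0, mul_zero], ?_⟩
      · -- 0 ≤ D k - g k * q k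
        rcases hg.lt_or_gt with hgneg | hgpos
        · rcases le_or_gt 0 (D k / g k) with hdg | hdg
          · rw [hqv, max_eq_right hdg, hcan]; linarith
          · rw [hqv, max_eq_left hdg.le, mul_zero, sub_zero]
            rcases div_neg_iff.mp hdg with ⟨h5, h6⟩ | ⟨h5, h6⟩
            · linarith
            · linarith
        · have hD := hDpos k (Or.inr hgpos.le)
          have hdg : 0 ≤ D k / g k := div_nonneg hD hgpos.le
          rw [hqv, max_eq_right hdg, hcan]; linarith
      · -- (D k - g k * q k) * xs k = 0
        rcases eq_or_lt_of_le (hxs k) with hx0 | hx0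
        · rw [← hx0]; ring
        · rcases hg.lt_or_gt with hgneg | hgpos
          · have hD2 : D k ≤ 0 := hDneg k hx0 (Or.inr hgneg.le)
            have hdg : 0 ≤ D k / g k := div_nonneg_of_nonpos hD2 hgneg.le
            rw [hqv, max_eq_right hdg, hcan]; ring
          · have hD := hDpos k (Or.inr hgpos.le)
            have hdg : 0 ≤ D k / g k := div_nonneg hD hgpos.le
            rw [hqv, max_eq_right hdg, hcan]; ring
  refine ⟨v, ⟨?_, ?_⟩, ?_, ?_⟩
  · -- primal membership
    exact ⟨xs, fun k => (xs k - x0 k)^2, hfeq, hfineq,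
      fun k => sq_to_soc3 (le_refl _), hxs, fun k => sq_nonneg _, rfl⟩
  · -- primal lower bound
    rintro w ⟨x, y, he, hi, hsoc, hx, hy, hw⟩
    have h1 : v ≤ ∑ k, (c k * x k + d k * zs k + r k * (x k - x0 k)^2) :=
      hmin x zs he hi hx hzs
    have h2 : ∑ k, (c k * x k + d k * zs k + r k * (x k - x0 k)^2) ≤ w := by
      rw [hw]
      apply Finset.sum_le_sum
      intro k _
      have hyk : (x k - x0 k)^2 ≤ y k := soc3_to_sq (hy k) (hsoc k)
      have := mul_le_mul_of_nonneg_left hyk (hr k).le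
      linarith
    linarith
  · -- dual membership
    refine ⟨p0, fun k => d k - h k * q k, q,
      fun k => r k * (1 + (xs k - x0 k)^2) / 2,
      fun k => r k * (1 - (xs k - x0 k)^2) / 2,
      fun k => -(r k * (xs k - x0 k)), ?_, ?_, ?_, ?_, fun k => (hq k).1, ?_⟩
    · intro k
      have h2 := (hq k).2.1
      simp only [hDdef, hD0def] at h2
      dsimp only
      linarith
    · intro k; dsimp only; linarith [le_refl (0:ℝ)]
    · intro k; dsimp only; ring_nf; exact le_refl _
    · intro k
      dsimp only
      show _ ≥ _
      have hγ0 : 0 ≤ r k * (1 + (xs k - x0 k)^2) / 2 := by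
        apply div_nonneg _ (by norm_num)
        exact mul_nonneg (hr k).le (by positivity)
      have hsq : (r k * (1 - (xs k - x0 k)^2) / 2)^2 + (-(r k * (xs k - x0 k)))^2
          = (r k * (1 + (xs k - x0 k)^2) / 2)^2 := by ring
      rw [hsq, Real.sqrt_sq hγ0]
    · -- value equality
      dsimp only
      rw [← hfeq, Finset.sum_mul, ← Finset.sum_add_distrib, hv]
      apply Finset.sum_congr rfl
      intro k _
      have h3 := (hq k).2.2.1
      have h4 := (hq k).2.2.2
      simp only [hσdef] at h3
      simp only [hDdef, hD0def] at h4
      ring_nf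
      ring_nf at h3 h4
      nlinarith [h3, h4]
  · -- dual upper bound (weak duality)
    rintro w ⟨p0', p', q', γ', α', β', hc1, hc2, hc3, hc4, hq', hw⟩
    rw [hw, ← hfeq, Finset.sum_mul, ← Finset.sum_add_distrib, hv]
    apply Finset.sum_le_sum
    intro k _
    obtain ⟨hγ0, hγsq⟩ := soc3_unpack (hc4 k)
    have t1 : 0 ≤ (c k - a k * p0' - g k * q' k - 2 * β' k) * xs k :=
      mul_nonneg (hc1 k) (hxs k)
    have t2 : 0 ≤ (d k - h k * q' k - p' k) * zs k := mul_nonneg (hc2 k) (hzs0 k)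
    have t3 : 0 ≤ q' k * (g k * xs k + h k * zs k - b k) :=
      mul_nonneg (hq' k) (hσ k)
    have t4 : 0 ≤ (r k - γ' k - α' k) * (xs k - x0 k)^2 :=
      mul_nonneg (hc3 k) (sq_nonneg _)
    have t5 : 0 ≤ 2 * β' k * (xs k - x0 k) + (γ' k + α' k) * (xs k - x0 k)^2 + γ' k - α' k :=
      quad_key hγ0 hγsq (le_refl _)
    nlinarith [t1, t2, t3, t4, t5]
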